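/- In any metric transportation game with n players, for every outcome σ and optimal egalitarian outcome σ*: d(u,v) ≤ 2·E(σ*) for all players u,v and d(u,t) ≤ E(σ*) for all players u, and consequently E(σ) ≤ (2n−1)·E(σ*). Hence the Sequential Price of Anarchy for E is at most 2n−1. -/

import Mathlib

open Finset

/-- Length of a bus route that visits the points of `l` in order and then ends at the
destination `t` (the initial segment from the depot is ignored). -/
noncomputable def routeLen {V : Type*} [PseudoMetricSpace V] (t : V) (l : List V) : ℝ :=
  ∑ i ∈ Finset.range l.length, dist (l.getD i t) (l.getD (i + 1) t)

/-- The route of bus `j` under outcome `σ`: the players that chose bus `j`, in the order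
given by the fixed permutation list `ord j` of bus `j`. -/
def busRoute {n m : ℕ} (ord : Fin m → List (Fin n)) (σ : Fin n → Fin m) (j : Fin m) :
    List (Fin n) :=
  (ord j).filter (fun i => decide (σ i = j))

/-- `ord` gives, for every bus, a permutation of all the players. -/
def validOrd {n m : ℕ} (ord : Fin m → List (Fin n)) : Prop :=
  ∀ j : Fin m, (ord j).Nodup ∧ ∀ i : Fin n, i ∈ ord j

/-- The cost of player `i` under outcome `σ`: the distance traveled by `i`'s bus from the
location of `i` to the destination `t`. -/
noncomputable def playerCost {V : Type*} [PseudoMetricSpace V] {n m : ℕ}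
    (x : Fin n → V) (t : V) (ord : Fin m → List (Fin n)) (σ : Fin n → Fin m)
    (i : Fin n) : ℝ :=
  routeLen t
    (((busRoute ord σ (σ i)).drop ((busRoute ord σ (σ i)).idxOf i)).map x)

/-- The utilitarian social cost: the sum of the costs of all players. -/
noncomputable def socialU {V : Type*} [PseudoMetricSpace V] {n m : ℕ}
    (x : Fin n → V) (t : V) (ord : Fin m → List (Fin n)) (σ : Fin n → Fin m) : ℝ :=
  ∑ i : Fin n, playerCost x t ord σ i

/-- The egalitarian social cost: the largest cost of a player. -/
noncomputable def socialE {V : Type*} [PseudoMetricSpace V] {n m : ℕ}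
    (x : Fin n → V) (t : V) (ord : Fin m → List (Fin n)) (σ : Fin n → Fin m) : ℝ :=
  ⨆ i : Fin n, playerCost x t ord σ i

/-- `σ` is a (pure) Nash equilibrium: no player can decrease her cost by unilaterally
switching to another bus. -/
def isNash {V : Type*} [PseudoMetricSpace V] {n m : ℕ}
    (x : Fin n → V) (t : V) (ord : Fin m → List (Fin n)) (σ : Fin n → Fin m) : Prop :=
  ∀ i : Fin n, ∀ j : Fin m,
    playerCost x t ord σ i ≤ playerCost x t ord (Function.update σ i j) i

lemma routeLen_cons {V : Type*} [PseudoMetricSpace V] (t a : V) (l : List V) :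
    routeLen t (a :: l) = dist a (l.getD 0 t) + routeLen t l := by
  unfold routeLen
  rw [List.length_cons, Finset.sum_range_succ']
  simp only [List.getD_cons_succ, List.getD_cons_zero]
  rw [add_comm]

lemma dist_head_le_routeLen {V : Type*} [PseudoMetricSpace V] (t : V) (l : List V) :
    dist (l.getD 0 t) t ≤ routeLen t l := by
  induction l with
  | nil => simp [routeLen]
  | cons a l ih =>
    rw [routeLen_cons]
    calc dist ((a :: l).getD 0 t) t = dist a t := by simp
      _ ≤ dist a (l.getD 0 t) + dist (l.getD 0 t) t := dist_triangle _ _ _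
      _ ≤ dist a (l.getD 0 t) + routeLen t l := by linarith

lemma routeLen_le {V : Type*} [PseudoMetricSpace V] (t : V) (E : ℝ) (hE : 0 ≤ E)
    (l : List V) {N : ℕ} (hN : 1 ≤ N) (hlen : l.length ≤ N)
    (h1 : ∀ a ∈ l, dist a t ≤ E) (h2 : ∀ a ∈ l, ∀ b ∈ l, dist a b ≤ 2 * E) :
    routeLen t l ≤ (2 * (N : ℝ) - 1) * E := by
  have hN' : (1:ℝ) ≤ 2 * (N:ℝ) - 1 := by
    have : (1:ℝ) ≤ (N:ℝ) := by exact_mod_cast hN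
    linarith
  rcases Nat.eq_zero_or_pos l.length with h0 | hpos
  · unfold routeLen; rw [h0]; simp; nlinarith
  · obtain ⟨L, hL⟩ : ∃ L, l.length = L + 1 := ⟨l.length - 1, by omega⟩
    have hmem : ∀ j < l.length, l.getD j t ∈ l := by
      intro j hj
      rw [List.getD_eq_getElem _ _ hj]
      exact List.getElem_mem _
    unfold routeLen
    rw [hL, Finset.sum_range_succ]
    have hlast : l.getD (L + 1) t = t := List.getD_eq_default _ _ (by omega)
    have hsum : ∑ j ∈ Finset.range L, dist (l.getD j t) (l.getD (j + 1) t) ≤ L * (2 * E) := by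
      calc ∑ j ∈ Finset.range L, dist (l.getD j t) (l.getD (j + 1) t)
          ≤ ∑ _j ∈ Finset.range L, (2 * E) := by
            apply Finset.sum_le_sum
            intro j hj
            rw [Finset.mem_range] at hj
            exact h2 _ (hmem j (by omega)) _ (hmem (j+1) (by omega))
        _ = L * (2 * E) := by rw [Finset.sum_const]; simp [mul_comm]
    have hlast' : dist (l.getD L t) (l.getD (L + 1) t) ≤ E := by
      rw [hlast]; exact h1 _ (hmem L (by omega))
    have hLN : (L : ℝ) ≤ (N : ℝ) - 1 := by
      have h : L + 1 ≤ N := by omega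
      have : (L:ℝ) + 1 ≤ (N:ℝ) := by exact_mod_cast h
      linarith
    nlinarith

/-- for every outcome `σ` and optimal egalitarian outcome `σ*`:
`d(u,v) ≤ 2·E(σ*)` for all players `u,v`, `d(u,t) ≤ E(σ*)` for all players `u`, and
consequently `E(σ) ≤ (2n-1)·E(σ*)` (hence `SPoA(E) ≤ 2n-1`). -/
theorem stmt11 {V : Type*} [MetricSpace V] {n m : ℕ} (hn : 1 ≤ n)
    (x : Fin n → V) (t : V) (ord : Fin m → List (Fin n)) (hord : validOrd ord)
    (σ σstar : Fin n → Fin m)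
    (hopt : ∀ σ' : Fin n → Fin m, socialE x t ord σstar ≤ socialE x t ord σ') :
    (∀ u v : Fin n, dist (x u) (x v) ≤ 2 * socialE x t ord σstar) ∧
    (∀ u : Fin n, dist (x u) t ≤ socialE x t ord σstar) ∧
    socialE x t ord σ ≤ (2 * (n : ℝ) - 1) * socialE x t ord σstar := by
  have hne : Nonempty (Fin n) := ⟨⟨0, hn⟩⟩
  -- each player's cost is at most the sup
  have hfin : ∀ (τ : Fin n → Fin m) (i : Fin n),
      playerCost x t ord τ i ≤ socialE x t ord τ := fun τ i =>
    le_ciSup (Set.Finite.bddAbove (Set.finite_range _)) i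
  -- player i is on its own bus route
  have hmemBus : ∀ (τ : Fin n → Fin m) (i : Fin n), i ∈ busRoute ord τ (τ i) := by
    intro τ i
    simp [busRoute, List.mem_filter, (hord (τ i)).2 i]
  -- basic lower bound on player cost
  have hbase : ∀ (τ : Fin n → Fin m) (i : Fin n),
      dist (x i) t ≤ playerCost x t ord τ i := by
    intro τ i
    set l := busRoute ord τ (τ i) with hl
    have hk : l.idxOf i < l.length := List.idxOf_lt_length_iff.2 (hmemBus τ i)
    have hhead : ((l.drop (l.idxOf i)).map x).getD 0 t = x i := by
      have hlen : 0 < ((l.drop (l.idxOf i)).map x).length := by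
        simp [List.length_drop]; omega
      rw [List.getD_eq_getElem _ _ hlen]
      simp [List.getElem_drop, List.getElem_idxOf]
    calc dist (x i) t = dist (((l.drop (l.idxOf i)).map x).getD 0 t) t := by rw [hhead]
      _ ≤ routeLen t ((l.drop (l.idxOf i)).map x) := dist_head_le_routeLen _ _
      _ = playerCost x t ord τ i := rfl
  set E := socialE x t ord σstar with hE
  have hdt : ∀ u : Fin n, dist (x u) t ≤ E := fun u =>
    le_trans (hbase σstar u) (hfin σstar u)
  have hEnn : 0 ≤ E := le_trans dist_nonneg (hdt ⟨0, hn⟩)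
  have hduv : ∀ u v : Fin n, dist (x u) (x v) ≤ 2 * E := by
    intro u v
    calc dist (x u) (x v) ≤ dist (x u) t + dist t (x v) := dist_triangle _ _ _
      _ = dist (x u) t + dist (x v) t := by rw [dist_comm t]
      _ ≤ E + E := add_le_add (hdt u) (hdt v)
      _ = 2 * E := by ring
  refine ⟨hduv, hdt, ?_⟩
  apply ciSup_le
  intro i
  have hlen_le : (busRoute ord σ (σ i)).length ≤ n := by
    have h1 : (busRoute ord σ (σ i)).length ≤ (ord (σ i)).length :=
      List.length_filter_le _ _
    have h2 : (ord (σ i)).length ≤ Fintype.card (Fin n) :=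
      List.Nodup.length_le_card (hord (σ i)).1
    simpa using le_trans h1 h2
  apply routeLen_le t E hEnn _ hn
  · rw [List.length_map, List.length_drop]
    omega
  · intro a ha
    rw [List.mem_map] at ha
    obtain ⟨u, _, rfl⟩ := ha
    exact hdt u
  · intro a ha b hb
    rw [List.mem_map] at ha hb
    obtain ⟨u, _, rfl⟩ := ha
    obtain ⟨v, _, rfl⟩ := hb
    exact hduv u v
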